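/- If ρ₁ is left-semi-conjugate to ρ₂ via some non-decreasing degree one map, then it is left-semi-conjugate to ρ₂ via an upper semicontinuous non-decreasing degree one map. Concretely, if φ̃ is a good lift of a left-semi-conjugacy such that h̃₁∘φ̃ = φ̃∘h̃₂ + m for appropriate lifts and constants m ∈ ℤ, then φ̃'(x) := sup{φ̃(y) : y < x} defines a good lift of a left-semi-conjugacy as well. -/

import Mathlib

noncomputable section

/-- The circle `S¹ = ℝ/ℤ`. -/
abbrev Circle1 : Type := AddCircle (1 : ℝ)

/-- Membership in `H̃ = {h̃ ∈ Homeo⁺(ℝ) : h̃(x+1) = h̃(x)+1}`. -/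
def InHtilde (f : ℝ → ℝ) : Prop :=
  StrictMono f ∧ Function.Surjective f ∧ ∀ x : ℝ, f (x + 1) = f x + 1

/-- An orientation-preserving homeomorphism of the circle. -/
def IsOPH (f : Circle1 → Circle1) : Prop :=
  ∃ ft : ℝ → ℝ, (∀ x : ℝ, f (↑x) = ↑(ft x)) ∧ InHtilde ft

/-- A circle action of a group `Γ`: a homomorphism `Γ → Homeo⁺(S¹)`. -/
def IsCircleAction {Γ : Type*} [Group Γ] (ρ : Γ → Circle1 → Circle1) : Prop :=
  (∀ γ, IsOPH (ρ γ)) ∧ ρ 1 = id ∧ ∀ g h : Γ, ρ (g * h) = ρ g ∘ ρ h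

/-- A homomorphism `Γ → H̃`, given as a map into functions `ℝ → ℝ`. -/
def IsHtildeAction {Γ : Type*} [Group Γ] (ρt : Γ → ℝ → ℝ) : Prop :=
  (∀ γ, InHtilde (ρt γ)) ∧ ρt 1 = id ∧ ∀ g h : Γ, ρt (g * h) = ρt g ∘ ρt h

/-- `φt : ℝ → ℝ` is a good lift of `φ : S¹ → S¹`. -/
def GoodLift (φ : Circle1 → Circle1) (φt : ℝ → ℝ) : Prop :=
  (∀ x : ℝ, φ (↑x) = ↑(φt x)) ∧ Monotone φt ∧ ∀ x : ℝ, φt (x + 1) = φt x + 1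

/-- If `ρ₁` is left-semi-conjugate to `ρ₂` via a non-decreasing degree one map `φ` whose
good lift `φ̃` satisfies `h̃₁(γ) ∘ φ̃ = φ̃ ∘ h̃₂(γ) + m(γ)` for lifts `h̃ᵢ(γ)` of
`ρᵢ(γ)` and constants `m(γ) ∈ ℤ`, then `φ̃'(x) := sup{φ̃(y) : y < x}` is again a good
lift (non-decreasing, commuting with integer translations) satisfying the same
semi-conjugacy equations; and moreover `ρ₁` is left-semi-conjugate to `ρ₂` via a
semicontinuous non-decreasing degree one map: there is an upper semicontinuous good lift
satisfying those equations. -/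
theorem upper_semicontinuous_semiconjugacy {Γ : Type*} [Group Γ]
    (ρ₁ ρ₂ : Γ → Circle1 → Circle1)
    (h₁ : IsCircleAction ρ₁) (h₂ : IsCircleAction ρ₂)
    (φ : Circle1 → Circle1) (φt : ℝ → ℝ) (hφ : GoodLift φ φt)
    (hsc : ∀ γ : Γ, ρ₁ γ ∘ φ = φ ∘ ρ₂ γ)
    (l₁ l₂ : Γ → ℝ → ℝ) (hl₁ : ∀ γ, InHtilde (l₁ γ)) (hl₂ : ∀ γ, InHtilde (l₂ γ))
    (hlift₁ : ∀ (γ : Γ) (x : ℝ), ρ₁ γ (↑x) = (↑(l₁ γ x) : Circle1))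
    (hlift₂ : ∀ (γ : Γ) (x : ℝ), ρ₂ γ (↑x) = (↑(l₂ γ x) : Circle1))
    (m : Γ → ℤ) (heq : ∀ (γ : Γ) (x : ℝ), l₁ γ (φt x) = φt (l₂ γ x) + m γ) :
    (Monotone (fun x : ℝ => sSup (φt '' Set.Iio x)) ∧
      (∀ x : ℝ, sSup (φt '' Set.Iio (x + 1)) = sSup (φt '' Set.Iio x) + 1) ∧
      ∀ (γ : Γ) (x : ℝ),
        l₁ γ (sSup (φt '' Set.Iio x)) = sSup (φt '' Set.Iio (l₂ γ x)) + m γ) ∧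
    ∃ ψ : ℝ → ℝ, Monotone ψ ∧ (∀ x : ℝ, ψ (x + 1) = ψ x + 1) ∧
      UpperSemicontinuous ψ ∧
      ∀ (γ : Γ) (x : ℝ), l₁ γ (ψ x) = ψ (l₂ γ x) + m γ := by
  obtain ⟨hlift, hmono, hper⟩ := hφ
  have hne : ∀ x : ℝ, (φt '' Set.Iio x).Nonempty :=
    fun x => ⟨φt (x - 1), ⟨x - 1, Set.mem_Iio.mpr (by linarith), rfl⟩⟩
  have hbdd : ∀ x : ℝ, BddAbove (φt '' Set.Iio x) := by
    intro x
    refine ⟨φt x, ?_⟩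
    rintro _ ⟨y, hy, rfl⟩
    exact hmono (le_of_lt hy)
  have hne' : ∀ x : ℝ, (φt '' Set.Ioi x).Nonempty :=
    fun x => ⟨φt (x + 1), ⟨x + 1, Set.mem_Ioi.mpr (by linarith), rfl⟩⟩
  have hbdd' : ∀ x : ℝ, BddBelow (φt '' Set.Ioi x) := by
    intro x
    refine ⟨φt x, ?_⟩
    rintro _ ⟨y, hy, rfl⟩
    exact hmono (le_of_lt hy)
  -- order isos from the l₁, l₂ actions
  have e₁ : ∀ γ : Γ, ∃ e : ℝ ≃o ℝ, ∀ x, e x = l₁ γ x :=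
    fun γ => ⟨StrictMono.orderIsoOfSurjective _ (hl₁ γ).1 (hl₁ γ).2.1, fun _ => rfl⟩
  -- translation iso by a constant c
  have htrans_sup : ∀ (c : ℝ) (S : Set ℝ), S.Nonempty → BddAbove S →
      sSup ((fun t => t + c) '' S) = sSup S + c := by
    intro c S hS hb
    exact ((OrderIso.addRight c).map_csSup' hS hb).symm
  have htrans_inf : ∀ (c : ℝ) (S : Set ℝ), S.Nonempty → BddBelow S →
      sInf ((fun t => t + c) '' S) = sInf S + c := by
    intro c S hS hb
    exact ((OrderIso.addRight c).map_csInf' hS hb).symm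
  -- image identities for periodicity
  have hsetIio : ∀ x : ℝ, φt '' Set.Iio (x + 1) = (fun t => t + 1) '' (φt '' Set.Iio x) := by
    intro x
    ext z
    constructor
    · rintro ⟨y, hy, rfl⟩
      refine ⟨φt (y - 1), ⟨y - 1, by simp only [Set.mem_Iio] at hy ⊢; linarith, rfl⟩, ?_⟩
      have := hper (y - 1)
      simp only [sub_add_cancel] at this
      simpa using this.symm
    · rintro ⟨_, ⟨y, hy, rfl⟩, rfl⟩
      exact ⟨y + 1, by simp only [Set.mem_Iio] at hy ⊢; linarith, hper y⟩
  have hsetIoi : ∀ x : ℝ, φt '' Set.Ioi (x + 1) = (fun t => t + 1) '' (φt '' Set.Ioi x) := by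
    intro x
    ext z
    constructor
    · rintro ⟨y, hy, rfl⟩
      refine ⟨φt (y - 1), ⟨y - 1, by simp only [Set.mem_Ioi] at hy ⊢; linarith, rfl⟩, ?_⟩
      have := hper (y - 1)
      simp only [sub_add_cancel] at this
      simpa using this.symm
    · rintro ⟨_, ⟨y, hy, rfl⟩, rfl⟩
      exact ⟨y + 1, by simp only [Set.mem_Ioi] at hy ⊢; linarith, hper y⟩
  -- image identities for the semiconjugacy
  have hsetEqIio : ∀ (γ : Γ) (x : ℝ),
      l₁ γ '' (φt '' Set.Iio x) = (fun t => t + (m γ : ℝ)) '' (φt '' Set.Iio (l₂ γ x)) := by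
    intro γ x
    ext z
    constructor
    · rintro ⟨_, ⟨y, hy, rfl⟩, rfl⟩
      exact ⟨φt (l₂ γ y), ⟨l₂ γ y, (hl₂ γ).1 hy, rfl⟩, (heq γ y).symm⟩
    · rintro ⟨_, ⟨w, hw, rfl⟩, rfl⟩
      obtain ⟨y, rfl⟩ := (hl₂ γ).2.1 w
      refine ⟨φt y, ⟨y, ?_, rfl⟩, (heq γ y)⟩
      exact ((hl₂ γ).1.lt_iff_lt).mp hw
  have hsetEqIoi : ∀ (γ : Γ) (x : ℝ),
      l₁ γ '' (φt '' Set.Ioi x) = (fun t => t + (m γ : ℝ)) '' (φt '' Set.Ioi (l₂ γ x)) := by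
    intro γ x
    ext z
    constructor
    · rintro ⟨_, ⟨y, hy, rfl⟩, rfl⟩
      exact ⟨φt (l₂ γ y), ⟨l₂ γ y, (hl₂ γ).1 hy, rfl⟩, (heq γ y).symm⟩
    · rintro ⟨_, ⟨w, hw, rfl⟩, rfl⟩
      obtain ⟨y, rfl⟩ := (hl₂ γ).2.1 w
      refine ⟨φt y, ⟨y, ?_, rfl⟩, (heq γ y)⟩
      exact ((hl₂ γ).1.lt_iff_lt).mp hw
  constructor
  · refine ⟨?_, ?_, ?_⟩
    · intro x y hxy
      exact csSup_le_csSup (hbdd y) (hne x)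
        (Set.image_mono (Set.Iio_subset_Iio hxy))
    · intro x
      rw [hsetIio x, htrans_sup 1 _ (hne x) (hbdd x)]
    · intro γ x
      obtain ⟨e, he⟩ := e₁ γ
      have h1 : l₁ γ (sSup (φt '' Set.Iio x)) = sSup (l₁ γ '' (φt '' Set.Iio x)) := by
        rw [← he]
        have := e.map_csSup' (hne x) (hbdd x)
        rw [this]
        congr 1
        ext z
        simp [he]
      rw [h1, hsetEqIio γ x, htrans_sup _ _ (hne _) (hbdd _)]
  · refine ⟨fun x => sInf (φt '' Set.Ioi x), ?_, ?_, ?_, ?_⟩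
    · intro x y hxy
      exact csInf_le_csInf (hbdd' x) (hne' y)
        (Set.image_mono (Set.Ioi_subset_Ioi hxy))
    · intro x
      show sInf (φt '' Set.Ioi (x + 1)) = sInf (φt '' Set.Ioi x) + 1
      rw [hsetIoi x, htrans_inf 1 _ (hne' x) (hbdd' x)]
    · intro x y hy
      obtain ⟨_, ⟨z, hz, rfl⟩, hlt⟩ := exists_lt_of_csInf_lt (hne' x) hy
      filter_upwards [Iio_mem_nhds hz] with w hw
      exact lt_of_le_of_lt (csInf_le (hbdd' w) ⟨z, hw, rfl⟩) hlt
    · intro γ x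
      obtain ⟨e, he⟩ := e₁ γ
      have h1 : l₁ γ (sInf (φt '' Set.Ioi x)) = sInf (l₁ γ '' (φt '' Set.Ioi x)) := by
        rw [← he]
        have := e.map_csInf' (hne' x) (hbdd' x)
        rw [this]
        congr 1
        ext z
        simp [he]
      rw [h1, hsetEqIoi γ x, htrans_inf _ _ (hne' _) (hbdd' _)]
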